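/- arXiv:1005.2698 — 2 statements merged into one kernel-verified Lean document; each statement's English description precedes it below -/
import Mathlib

section
/- At every (x,y,z) ∈ 𝒜, the function f is twice differentiable and its second derivative, evaluated as a quadratic form on the tangent vector (s,t,r), equals cot α·(t−r)² + cot β·(r−s)² + cot γ·(s−t)². -/
open Real

/-- Milnor's Lobachevsky function. -/
noncomputable def Lob (x : ℝ) : ℝ := -∫ t in (0:ℝ)..x, Real.log |2 * Real.sin t|

/-- Angle opposite the side of length `a` in a euclidean triangle with side
lengths `a`, `b`, `c`, given by the arccos formula (which, since `Real.arccos`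
clamps, also implements the broken-triangle convention: the angle opposite a
too-long side is `π` and the other two angles are `0`). -/
noncomputable def eang (a b c : ℝ) : ℝ := Real.arccos ((b^2 + c^2 - a^2) / (2*b*c))

/-- The open domain `𝒜` where `eˣ, e^y, e^z` satisfy the strict triangle
inequalities. -/
def Adom : Set (ℝ × ℝ × ℝ) :=
  {p | Real.exp p.1 < Real.exp p.2.1 + Real.exp p.2.2 ∧
       Real.exp p.2.1 < Real.exp p.2.2 + Real.exp p.1 ∧
       Real.exp p.2.2 < Real.exp p.1 + Real.exp p.2.1}

/-- The triangle function `f(x,y,z) = αx + βy + γz + Л(α) + Л(β) + Л(γ)`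
(extended to all of `ℝ³` by the broken-triangle convention). -/
noncomputable def fTri (p : ℝ × ℝ × ℝ) : ℝ :=
  eang (Real.exp p.1) (Real.exp p.2.1) (Real.exp p.2.2) * p.1 +
  eang (Real.exp p.2.1) (Real.exp p.2.2) (Real.exp p.1) * p.2.1 +
  eang (Real.exp p.2.2) (Real.exp p.1) (Real.exp p.2.1) * p.2.2 +
  Lob (eang (Real.exp p.1) (Real.exp p.2.1) (Real.exp p.2.2)) +
  Lob (eang (Real.exp p.2.1) (Real.exp p.2.2) (Real.exp p.1)) +
  Lob (eang (Real.exp p.2.2) (Real.exp p.1) (Real.exp p.2.1))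

section aux
open MeasureTheory intervalIntegral Set

lemma II_log {θ : ℝ} (hθ : 0 < θ) : IntervalIntegrable Real.log volume 0 θ := by
  have key : ∀ θ' : ℝ, 0 < θ' → θ' ≤ 1 → IntervalIntegrable Real.log volume 0 θ' := by
    intro θ' h0 h1
    rw [intervalIntegrable_iff_integrableOn_Ioc_of_le h0.le]
    have h : IntegrableOn (fun x : ℝ => -Real.log x) (Ioc 0 θ') volume := by
      apply integrableOn_deriv_of_nonneg (g := fun x => x - x * Real.log x)
      · exact (continuous_id.sub Real.continuous_mul_log).continuousOn
      · intro x hx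
        have := (hasDerivAt_id x).sub (Real.hasDerivAt_mul_log hx.1.ne')
        exact this.congr_deriv (by ring)
      · intro x hx
        have : Real.log x ≤ 0 := Real.log_nonpos hx.1.le (hx.2.le.trans h1)
        linarith
    have h2 := h.neg
    apply h2.congr
    filter_upwards with x
    simp
  rcases le_total θ 1 with h | h
  · exact key θ hθ h
  · exact (key 1 one_pos le_rfl).trans
      (intervalIntegrable_log (by rw [Set.uIcc_of_le h]; intro hmem; exact absurd hmem.1 (by norm_num)) )

lemma sin_lower {θ t : ℝ} (hθπ : θ < π) (ht0 : 0 < t) (htθ : t ≤ θ) :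
    Real.sin θ / θ * t ≤ Real.sin t := by
  have hθ0 : 0 < θ := lt_of_lt_of_le ht0 htθ
  have h0mem : (0:ℝ) ∈ Set.Icc (0:ℝ) π := ⟨le_refl _, Real.pi_pos.le⟩
  have hθmem : θ ∈ Set.Icc (0:ℝ) π := ⟨hθ0.le, hθπ.le⟩
  have ha : (0:ℝ) ≤ 1 - t/θ := by rw [sub_nonneg]; exact div_le_one_of_le₀ htθ hθ0.le
  have hb : (0:ℝ) ≤ t/θ := by positivity
  have hab : (1 - t/θ) + t/θ = 1 := by ring
  have h := (strictConcaveOn_sin_Icc.concaveOn).2 h0mem hθmem ha hb hab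
  simp only [smul_eq_mul, mul_zero, Real.sin_zero, zero_add] at h
  rw [div_mul_cancel₀ _ hθ0.ne'] at h
  have hrw : Real.sin θ / θ * t = t/θ * Real.sin θ := by ring
  rw [hrw]
  linarith

lemma II_logsin {θ : ℝ} (hθ0 : 0 < θ) (hθπ : θ < π) :
    IntervalIntegrable (fun t => Real.log |2 * Real.sin t|) volume 0 θ := by
  have hIIlog : IntervalIntegrable Real.log volume 0 θ := II_log hθ0
  rw [intervalIntegrable_iff_integrableOn_Ioc_of_le hθ0.le] at hIIlog ⊢
  set k : ℝ := Real.sin θ / θ with hk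
  have hkpos : 0 < k := div_pos (Real.sin_pos_of_pos_of_lt_pi hθ0 hθπ) hθ0
  have hg : IntegrableOn
      (fun t => |Real.log (2*k) + Real.log t| + |Real.log 2 + Real.log t|) (Ioc 0 θ) volume :=
    (((integrable_const _).add hIIlog).abs).add (((integrable_const _).add hIIlog).abs)
  apply Integrable.mono hg
  · exact (Real.measurable_log.comp
      ((continuous_abs.comp (continuous_const.mul Real.continuous_sin)).measurable)).aestronglyMeasurable
  · rw [ae_restrict_iff' measurableSet_Ioc]
    filter_upwards with t ht
    have ht0 : 0 < t := ht.1
    have hsinpos : 0 < Real.sin t := Real.sin_pos_of_pos_of_lt_pi ht0 (lt_of_le_of_lt ht.2 hθπ)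
    have hlow : k * t ≤ Real.sin t := sin_lower hθπ ht0 ht.2
    have hup : Real.sin t ≤ t := Real.sin_le ht0.le
    have habs : |2 * Real.sin t| = 2 * Real.sin t := abs_of_pos (by linarith)
    have h1 : Real.log (2 * Real.sin t) ≤ Real.log 2 + Real.log t := by
      rw [← Real.log_mul (by norm_num) ht0.ne']
      exact Real.log_le_log (by positivity) (by linarith)
    have h2 : Real.log (2*k) + Real.log t ≤ Real.log (2 * Real.sin t) := by
      rw [← Real.log_mul (by positivity) ht0.ne']
      exact Real.log_le_log (by positivity) (by nlinarith)
    rw [Real.norm_eq_abs, Real.norm_eq_abs, habs]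
    have hb1 : |Real.log (2*k) + Real.log t| + |Real.log 2 + Real.log t| ≥ 0 := by positivity
    rw [abs_of_nonneg hb1]
    rcases le_total 0 (Real.log (2 * Real.sin t)) with hc | hc
    · rw [abs_of_nonneg hc]
      calc Real.log (2 * Real.sin t) ≤ Real.log 2 + Real.log t := h1
        _ ≤ |Real.log 2 + Real.log t| := le_abs_self _
        _ ≤ _ := le_add_of_nonneg_left (abs_nonneg _)
    · rw [abs_of_nonpos hc]
      calc -Real.log (2 * Real.sin t) ≤ -(Real.log (2*k) + Real.log t) := by linarith
        _ ≤ |Real.log (2*k) + Real.log t| := neg_le_abs _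
        _ ≤ _ := le_add_of_nonneg_right (abs_nonneg _)

lemma Lob_hasDerivAt {θ : ℝ} (hθ0 : 0 < θ) (hθπ : θ < π) :
    HasDerivAt Lob (-Real.log (2 * Real.sin θ)) θ := by
  have hsin : 0 < Real.sin θ := Real.sin_pos_of_pos_of_lt_pi hθ0 hθπ
  have hcontOn : ContinuousOn (fun t => Real.log |2 * Real.sin t|) (Ioo 0 π) := by
    intro t ht
    apply ContinuousWithinAt.log
    · exact ((continuous_abs.comp (continuous_const.mul Real.continuous_sin)).continuousWithinAt)
    · have hs : 0 < Real.sin t := Real.sin_pos_of_pos_of_lt_pi ht.1 ht.2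
      exact abs_ne_zero.mpr (by positivity)
  have hmeas := ContinuousOn.stronglyMeasurableAtFilter (μ := volume) isOpen_Ioo hcontOn θ ⟨hθ0, hθπ⟩
  have hcont : ContinuousAt (fun t => Real.log |2 * Real.sin t|) θ := by
    apply ContinuousAt.log
    · exact (continuous_abs.comp (continuous_const.mul Real.continuous_sin)).continuousAt
    · exact abs_ne_zero.mpr (by positivity)
  have h := (intervalIntegral.integral_hasDerivAt_right (II_logsin hθ0 hθπ) hmeas hcont).neg
  have heq : Real.log |2 * Real.sin θ| = Real.log (2 * Real.sin θ) := by
    rw [abs_of_pos (by linarith)]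
  rw [heq] at h
  exact h

end aux

noncomputable def Qof (a b c : ℝ) : ℝ := (a+b+c)*(-a+b+c)*(a-b+c)*(a+b-c)

section geom
variable {a b c : ℝ} (ha : 0 < a) (hb : 0 < b) (hc : 0 < c)
  (t1 : a < b + c) (t2 : b < c + a) (t3 : c < a + b)

include ha hb hc t1 t2 t3

lemma Qof_pos : 0 < Qof a b c := by
  have h1 : 0 < a+b+c := by linarith
  have h2 : 0 < -a+b+c := by linarith
  have h3 : 0 < a-b+c := by linarith
  have h4 : 0 < a+b-c := by linarith
  unfold Qof; positivity

lemma u_lt_one : (b^2 + c^2 - a^2) / (2*b*c) < 1 := by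
  rw [div_lt_one (by positivity)]
  nlinarith

lemma u_gt_neg_one : -1 < (b^2 + c^2 - a^2) / (2*b*c) := by
  rw [show (-1 : ℝ) = -(2*b*c) / (2*b*c) by field_simp, div_lt_div_iff_of_pos_right (by positivity)]
  nlinarith

lemma cos_eang : Real.cos (eang a b c) = (b^2 + c^2 - a^2) / (2*b*c) :=
  Real.cos_arccos (u_gt_neg_one ha hb hc t1 t2 t3).le (u_lt_one ha hb hc t1 t2 t3).le

lemma eang_pos : 0 < eang a b c :=
  Real.arccos_pos.2 (u_lt_one ha hb hc t1 t2 t3)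

lemma eang_lt_pi : eang a b c < π := by
  refine (Real.arccos_le_pi _).lt_of_ne fun h => ?_
  have := Real.arccos_eq_pi.1 h
  have := u_gt_neg_one ha hb hc t1 t2 t3
  linarith

lemma sqrt_one_sub_u_sq :
    Real.sqrt (1 - ((b^2 + c^2 - a^2) / (2*b*c))^2) = Real.sqrt (Qof a b c) / (2*b*c) := by
  have h1 : 1 - ((b^2 + c^2 - a^2) / (2*b*c))^2 = Qof a b c / (2*b*c)^2 := by
    unfold Qof; field_simp; ring
  rw [h1, Real.sqrt_div (Qof_pos ha hb hc t1 t2 t3).le, Real.sqrt_sq (by positivity)]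

lemma sin_eang : Real.sin (eang a b c) = Real.sqrt (Qof a b c) / (2*b*c) := by
  rw [eang, Real.sin_arccos, sqrt_one_sub_u_sq ha hb hc t1 t2 t3]

lemma sin_eang_pos : 0 < Real.sin (eang a b c) :=
  Real.sin_pos_of_pos_of_lt_pi (eang_pos ha hb hc t1 t2 t3) (eang_lt_pi ha hb hc t1 t2 t3)

lemma cot_eang : Real.cot (eang a b c) = (b^2 + c^2 - a^2) / Real.sqrt (Qof a b c) := by
  have hs : 0 < Real.sqrt (Qof a b c) := Real.sqrt_pos.2 (Qof_pos ha hb hc t1 t2 t3)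
  rw [Real.cot_eq_cos_div_sin, cos_eang ha hb hc t1 t2 t3, sin_eang ha hb hc t1 t2 t3]
  field_simp

lemma log_ratio : Real.log a - Real.log (2 * Real.sin (eang a b c)) =
    Real.log a + Real.log b + Real.log c - Real.log (Real.sqrt (Qof a b c)) := by
  have hs : 0 < Real.sqrt (Qof a b c) := Real.sqrt_pos.2 (Qof_pos ha hb hc t1 t2 t3)
  rw [sin_eang ha hb hc t1 t2 t3]
  rw [show 2 * (Real.sqrt (Qof a b c) / (2*b*c)) = Real.sqrt (Qof a b c) / (b*c) by
    field_simp]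
  rw [Real.log_div hs.ne' (by positivity), Real.log_mul hb.ne' hc.ne']
  ring

end geom

section deriv

lemma key {q : ℝ×ℝ×ℝ} {X Y Z : ℝ×ℝ×ℝ → ℝ} {L1 L2 L3 : ℝ×ℝ×ℝ →L[ℝ] ℝ}
    (hX : HasFDerivAt X L1 q) (hY : HasFDerivAt Y L2 q) (hZ : HasFDerivAt Z L3 q)
    (t1 : Real.exp (X q) < Real.exp (Y q) + Real.exp (Z q))
    (t2 : Real.exp (Y q) < Real.exp (Z q) + Real.exp (X q))
    (t3 : Real.exp (Z q) < Real.exp (X q) + Real.exp (Y q)) :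
    HasFDerivAt (fun w => eang (Real.exp (X w)) (Real.exp (Y w)) (Real.exp (Z w)))
      ((2*(Real.exp (X q))^2 / Real.sqrt (Qof (Real.exp (X q)) (Real.exp (Y q)) (Real.exp (Z q)))) • L1
       - (((Real.exp (X q))^2+(Real.exp (Y q))^2-(Real.exp (Z q))^2) / Real.sqrt (Qof (Real.exp (X q)) (Real.exp (Y q)) (Real.exp (Z q)))) • L2
       - (((Real.exp (X q))^2+(Real.exp (Z q))^2-(Real.exp (Y q))^2) / Real.sqrt (Qof (Real.exp (X q)) (Real.exp (Y q)) (Real.exp (Z q)))) • L3) q := by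
  set a := Real.exp (X q) with ha_def
  set b := Real.exp (Y q) with hb_def
  set c := Real.exp (Z q) with hc_def
  have ha : 0 < a := Real.exp_pos _
  have hb : 0 < b := Real.exp_pos _
  have hc : 0 < c := Real.exp_pos _
  have hQ : 0 < Qof a b c := Qof_pos ha hb hc t1 t2 t3
  have hs : 0 < Real.sqrt (Qof a b c) := Real.sqrt_pos.2 hQ
  have hgt := u_gt_neg_one ha hb hc t1 t2 t3
  have hlt := u_lt_one ha hb hc t1 t2 t3
  have hA : HasFDerivAt (fun w => Real.exp (X w)) (a • L1) q := hX.exp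
  have hB : HasFDerivAt (fun w => Real.exp (Y w)) (b • L2) q := hY.exp
  have hC : HasFDerivAt (fun w => Real.exp (Z w)) (c • L3) q := hZ.exp
  have hN : HasFDerivAt
      (fun w => Real.exp (Y w)^2 + Real.exp (Z w)^2 - Real.exp (X w)^2)
      ((b • (b • L2) + b • (b • L2) + (c • (c • L3) + c • (c • L3))) - (a • (a • L1) + a • (a • L1))) q := by
    have h2 : HasFDerivAt (fun w => Real.exp (Y w)^2) (b • (b • L2) + b • (b • L2)) q := by
      have := hB.mul hB
      simp only [← pow_two] at this
      exact this
    have h3 : HasFDerivAt (fun w => Real.exp (Z w)^2) (c • (c • L3) + c • (c • L3)) q := by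
      have := hC.mul hC
      simp only [← pow_two] at this
      exact this
    have h1 : HasFDerivAt (fun w => Real.exp (X w)^2) (a • (a • L1) + a • (a • L1)) q := by
      have := hA.mul hA
      simp only [← pow_two] at this
      exact this
    exact (h2.add h3).sub h1
  have hDen : HasFDerivAt (fun w => 2 * Real.exp (Y w) * Real.exp (Z w))
      ((2*b) • (c • L3) + c • ((2:ℝ) • (b • L2))) q := by
    have h2b : HasFDerivAt (fun w => 2 * Real.exp (Y w)) ((2:ℝ) • (b • L2)) q := by
      exact hB.const_mul (2:ℝ)
    exact (h2b.mul hC)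
  have hDenNe : (2 * b * c) ≠ 0 := by positivity
  have hInv : HasDerivAt (fun x : ℝ => x⁻¹) (-((2*b*c)^2)⁻¹) (2*b*c) := by
    have := hasDerivAt_inv hDenNe
    simpa using this
  have hUinv : HasFDerivAt (fun w => (2 * Real.exp (Y w) * Real.exp (Z w))⁻¹)
      ((-((2*b*c)^2)⁻¹) • ((2*b) • (c • L3) + c • ((2:ℝ) • (b • L2)))) q :=
    hInv.comp_hasFDerivAt q hDen
  have hU := hN.mul hUinv
  have hfun : (fun w => eang (Real.exp (X w)) (Real.exp (Y w)) (Real.exp (Z w)))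
      = fun w => Real.arccos ((Real.exp (Y w)^2 + Real.exp (Z w)^2 - Real.exp (X w)^2) *
          (2 * Real.exp (Y w) * Real.exp (Z w))⁻¹) := by
    funext w
    rw [eang, div_eq_mul_inv]
  rw [hfun]
  have hne1 : (b^2 + c^2 - a^2) * (2*b*c)⁻¹ ≠ -1 := by
    rw [← div_eq_mul_inv]; exact hgt.ne'
  have hne2 : (b^2 + c^2 - a^2) * (2*b*c)⁻¹ ≠ 1 := by
    rw [← div_eq_mul_inv]; exact hlt.ne
  have harc := (Real.hasDerivAt_arccos hne1 hne2).comp_hasFDerivAt q hU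
  have hsq : Real.sqrt (1 - ((b^2 + c^2 - a^2) * (2*b*c)⁻¹)^2) = Real.sqrt (Qof a b c) / (2*b*c) := by
    rw [← div_eq_mul_inv]; exact sqrt_one_sub_u_sq ha hb hc t1 t2 t3
  refine harc.congr_fderiv ?_
  refine ContinuousLinearMap.ext fun v => ?_
  simp only [ContinuousLinearMap.sub_apply, ContinuousLinearMap.add_apply,
    ContinuousLinearMap.smul_apply, smul_eq_mul, ContinuousLinearMap.coe_smul',
    Pi.smul_apply, ContinuousLinearMap.coe_sub', Pi.sub_apply, ContinuousLinearMap.coe_add',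
    Pi.add_apply, ContinuousLinearMap.neg_apply]
  rw [hsq]
  field_simp
  ring

end deriv

noncomputable def P1 : ℝ×ℝ×ℝ →L[ℝ] ℝ := ContinuousLinearMap.fst ℝ ℝ (ℝ×ℝ)
noncomputable def P2 : ℝ×ℝ×ℝ →L[ℝ] ℝ :=
  (ContinuousLinearMap.fst ℝ ℝ ℝ).comp (ContinuousLinearMap.snd ℝ ℝ (ℝ×ℝ))
noncomputable def P3 : ℝ×ℝ×ℝ →L[ℝ] ℝ :=
  (ContinuousLinearMap.snd ℝ ℝ ℝ).comp (ContinuousLinearMap.snd ℝ ℝ (ℝ×ℝ))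

noncomputable def lin (c₁ c₂ c₃ : ℝ) : ℝ×ℝ×ℝ →L[ℝ] ℝ := c₁ • P1 + c₂ • P2 + c₃ • P3

lemma lin_apply (c₁ c₂ c₃ : ℝ) (v : ℝ×ℝ×ℝ) :
    lin c₁ c₂ c₃ v = c₁ * v.1 + c₂ * v.2.1 + c₃ * v.2.2 := by
  simp [lin, P1, P2, P3]

lemma Qof_symm1 (a b c : ℝ) : Qof b c a = Qof a b c := by unfold Qof; ring
lemma Qof_symm2 (a b c : ℝ) : Qof c a b = Qof a b c := by unfold Qof; ring

lemma fTri_deriv {q : ℝ×ℝ×ℝ} (hq : q ∈ Adom) :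
    HasFDerivAt fTri
      (lin (eang (Real.exp q.1) (Real.exp q.2.1) (Real.exp q.2.2))
           (eang (Real.exp q.2.1) (Real.exp q.2.2) (Real.exp q.1))
           (eang (Real.exp q.2.2) (Real.exp q.1) (Real.exp q.2.1))) q := by
  obtain ⟨tt1, tt2, tt3⟩ := hq
  have h1 : HasFDerivAt (fun w : ℝ×ℝ×ℝ => w.1) P1 q := hasFDerivAt_fst
  have h2 : HasFDerivAt (fun w : ℝ×ℝ×ℝ => w.2.1) P2 q := hasFDerivAt_fst.comp q hasFDerivAt_snd
  have h3 : HasFDerivAt (fun w : ℝ×ℝ×ℝ => w.2.2) P3 q := hasFDerivAt_snd.comp q hasFDerivAt_snd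
  have hα := key h1 h2 h3 tt1 tt2 tt3
  have hβ := key h2 h3 h1 tt2 tt3 tt1
  have hγ := key h3 h1 h2 tt3 tt1 tt2
  have ha : (0:ℝ) < Real.exp q.1 := Real.exp_pos _
  have hb : (0:ℝ) < Real.exp q.2.1 := Real.exp_pos _
  have hc : (0:ℝ) < Real.exp q.2.2 := Real.exp_pos _
  have hα0 := eang_pos ha hb hc tt1 tt2 tt3
  have hαπ := eang_lt_pi ha hb hc tt1 tt2 tt3
  have hβ0 := eang_pos hb hc ha tt2 tt3 tt1
  have hβπ := eang_lt_pi hb hc ha tt2 tt3 tt1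
  have hγ0 := eang_pos hc ha hb tt3 tt1 tt2
  have hγπ := eang_lt_pi hc ha hb tt3 tt1 tt2
  have hLα := (Lob_hasDerivAt hα0 hαπ).comp_hasFDerivAt q hα
  have hLβ := (Lob_hasDerivAt hβ0 hβπ).comp_hasFDerivAt q hβ
  have hLγ := (Lob_hasDerivAt hγ0 hγπ).comp_hasFDerivAt q hγ
  have hm1 := hα.mul h1
  have hm2 := hβ.mul h2
  have hm3 := hγ.mul h3
  have hbig := ((((hm1.add hm2).add hm3).add hLα).add hLβ).add hLγ
  refine hbig.congr_fderiv ?_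
  refine ContinuousLinearMap.ext fun v => ?_
  simp only [lin, P1, P2, P3, ContinuousLinearMap.sub_apply, ContinuousLinearMap.add_apply,
    ContinuousLinearMap.smul_apply, smul_eq_mul, ContinuousLinearMap.coe_smul',
    Pi.smul_apply, ContinuousLinearMap.coe_sub', Pi.sub_apply, ContinuousLinearMap.coe_add',
    Pi.add_apply, ContinuousLinearMap.neg_apply, ContinuousLinearMap.coe_comp', Function.comp_apply,
    ContinuousLinearMap.coe_fst', ContinuousLinearMap.coe_snd']
  set a := Real.exp q.1 with ha_def
  set b := Real.exp q.2.1 with hb_def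
  set c := Real.exp q.2.2 with hc_def
  rw [Qof_symm1 a b c, Qof_symm2 a b c]
  have hsq : 0 < Real.sqrt (Qof a b c) := Real.sqrt_pos.2 (Qof_pos ha hb hc tt1 tt2 tt3)
  have e1 : q.1 = (Real.log a + Real.log b + Real.log c - Real.log (Real.sqrt (Qof a b c)))
      + Real.log (2 * Real.sin (eang a b c)) := by
    have := log_ratio ha hb hc tt1 tt2 tt3
    have hqa : q.1 = Real.log a := (Real.log_exp q.1).symm
    linarith
  have e2 : q.2.1 = (Real.log a + Real.log b + Real.log c - Real.log (Real.sqrt (Qof a b c)))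
      + Real.log (2 * Real.sin (eang b c a)) := by
    have := log_ratio hb hc ha tt2 tt3 tt1
    rw [Qof_symm1 a b c] at this
    have hqa : q.2.1 = Real.log b := (Real.log_exp q.2.1).symm
    linarith
  have e3 : q.2.2 = (Real.log a + Real.log b + Real.log c - Real.log (Real.sqrt (Qof a b c)))
      + Real.log (2 * Real.sin (eang c a b)) := by
    have := log_ratio hc ha hb tt3 tt1 tt2
    rw [Qof_symm2 a b c] at this
    have hqa : q.2.2 = Real.log c := (Real.log_exp q.2.2).symm
    linarith
  rw [e1, e2, e3]
  ring

lemma isOpen_Adom : IsOpen Adom := by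
  have h1 : IsOpen {p : ℝ×ℝ×ℝ | Real.exp p.1 < Real.exp p.2.1 + Real.exp p.2.2} :=
    isOpen_lt (by fun_prop) (by fun_prop)
  have h2 : IsOpen {p : ℝ×ℝ×ℝ | Real.exp p.2.1 < Real.exp p.2.2 + Real.exp p.1} :=
    isOpen_lt (by fun_prop) (by fun_prop)
  have h3 : IsOpen {p : ℝ×ℝ×ℝ | Real.exp p.2.2 < Real.exp p.1 + Real.exp p.2.1} :=
    isOpen_lt (by fun_prop) (by fun_prop)
  exact h1.inter (h2.inter h3)


/-- At every point of `𝒜`, `f` is twice differentiable and its second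
derivative, as a quadratic form on `(s,t,r)`, equals
`cot α·(t−r)² + cot β·(r−s)² + cot γ·(s−t)²`. -/
theorem fTri_second_derivative (p : ℝ × ℝ × ℝ) (hp : p ∈ Adom) :
    ∃ f' : ℝ × ℝ × ℝ → (ℝ × ℝ × ℝ →L[ℝ] ℝ),
    ∃ f'' : ℝ × ℝ × ℝ →L[ℝ] (ℝ × ℝ × ℝ →L[ℝ] ℝ),
      (∀ᶠ q in nhds p, HasFDerivAt fTri (f' q) q) ∧
      HasFDerivAt f' f'' p ∧
      ∀ s t r : ℝ, f'' (s, t, r) (s, t, r) =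
        Real.cot (eang (Real.exp p.1) (Real.exp p.2.1) (Real.exp p.2.2)) * (t - r)^2 +
        Real.cot (eang (Real.exp p.2.1) (Real.exp p.2.2) (Real.exp p.1)) * (r - s)^2 +
        Real.cot (eang (Real.exp p.2.2) (Real.exp p.1) (Real.exp p.2.1)) * (s - t)^2 := by

  obtain ⟨tt1, tt2, tt3⟩ := hp
  have h1 : HasFDerivAt (fun w : ℝ×ℝ×ℝ => w.1) P1 p := hasFDerivAt_fst
  have h2 : HasFDerivAt (fun w : ℝ×ℝ×ℝ => w.2.1) P2 p := hasFDerivAt_fst.comp p hasFDerivAt_snd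
  have h3 : HasFDerivAt (fun w : ℝ×ℝ×ℝ => w.2.2) P3 p := hasFDerivAt_snd.comp p hasFDerivAt_snd
  have hα := key h1 h2 h3 tt1 tt2 tt3
  have hβ := key h2 h3 h1 tt2 tt3 tt1
  have hγ := key h3 h1 h2 tt3 tt1 tt2
  have ha : (0:ℝ) < Real.exp p.1 := Real.exp_pos _
  have hb : (0:ℝ) < Real.exp p.2.1 := Real.exp_pos _
  have hc : (0:ℝ) < Real.exp p.2.2 := Real.exp_pos _
  have s1 := hα.smul (hasFDerivAt_const P1 p)
  rw [smul_zero, zero_add] at s1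
  have s2 := hβ.smul (hasFDerivAt_const P2 p)
  rw [smul_zero, zero_add] at s2
  have s3 := hγ.smul (hasFDerivAt_const P3 p)
  rw [smul_zero, zero_add] at s3
  have hf'' := (s1.add s2).add s3
  refine ⟨fun q => lin (eang (Real.exp q.1) (Real.exp q.2.1) (Real.exp q.2.2))
           (eang (Real.exp q.2.1) (Real.exp q.2.2) (Real.exp q.1))
           (eang (Real.exp q.2.2) (Real.exp q.1) (Real.exp q.2.1)), _, ?_, hf'', ?_⟩
  · exact (isOpen_Adom.eventually_mem ⟨tt1, tt2, tt3⟩).mono (fun q hq => fTri_deriv hq)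
  · intro s t r
    simp only [ContinuousLinearMap.add_apply, ContinuousLinearMap.smulRight_apply,
      ContinuousLinearMap.sub_apply, ContinuousLinearMap.smul_apply, smul_eq_mul,
      ContinuousLinearMap.coe_smul', Pi.smul_apply, ContinuousLinearMap.coe_sub',
      Pi.sub_apply, ContinuousLinearMap.coe_add', Pi.add_apply,
      ContinuousLinearMap.coe_comp', Function.comp_apply,
      ContinuousLinearMap.coe_fst', ContinuousLinearMap.coe_snd', P1, P2, P3]
    rw [cot_eang ha hb hc tt1 tt2 tt3, cot_eang hb hc ha tt2 tt3 tt1,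
      cot_eang hc ha hb tt3 tt1 tt2,
      Qof_symm1 (Real.exp p.1) (Real.exp p.2.1) (Real.exp p.2.2),
      Qof_symm2 (Real.exp p.1) (Real.exp p.2.1) (Real.exp p.2.2)]
    ring
end

section
/- For all u : V → ℝ and all h ∈ ℝ, E(u + h·1_V) = E(u) + h·(Σ_{i∈V} Θ_i − π·|T|), where 1_V is the constant function 1. Consequently, E(u + h·1_V) = E(u) holds for all u and all h if and only if Σ_{i∈V} Θ_i = π·|T|. -/
open Real Finset

/-- The modified logarithmic lengths `λ̃_{ij} = λ_{ij} + u_i + u_j`. -/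
def lamT {V : Type*} (lam : V → V → ℝ) (u : V → ℝ) (i j : V) : ℝ :=
  lam i j + u i + u j

/-- The modified lengths `ℓ̃_{ij} = e^{λ̃_{ij}/2}`. -/
noncomputable def ellT {V : Type*} (lam : V → V → ℝ) (u : V → ℝ) (i j : V) : ℝ :=
  Real.exp (lamT lam u i j / 2)

/-- The angle at the vertex `i` in the euclidean triangle `ijk` with side
lengths `ℓ̃_{ij}, ℓ̃_{jk}, ℓ̃_{ki}` (extended by the broken-triangle convention). -/
noncomputable def angAt {V : Type*} (lam : V → V → ℝ) (u : V → ℝ) (i j k : V) : ℝ :=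
  eang (ellT lam u j k) (ellT lam u k i) (ellT lam u i j)

/-- The function `E_{T,Θ,λ}(u)` of the first variational principle. -/
noncomputable def Efun {V T : Type*} [Fintype V] [Fintype T]
    (tv : T → V × V × V) (lam : V → V → ℝ) (Θ : V → ℝ) (u : V → ℝ) : ℝ :=
  (∑ t : T,
    (2 * fTri (lamT lam u (tv t).1 (tv t).2.1 / 2,
               lamT lam u (tv t).2.1 (tv t).2.2 / 2,
               lamT lam u (tv t).2.2 (tv t).1 / 2)
      - (π/2) * (lamT lam u (tv t).1 (tv t).2.1
               + lamT lam u (tv t).2.1 (tv t).2.2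
               + lamT lam u (tv t).2.2 (tv t).1)))
  + ∑ i : V, Θ i * u i

lemma arccos_antitone : Antitone Real.arccos := by
  intro x y hxy
  simp only [Real.arccos_eq_pi_div_two_sub_arcsin]
  have := Real.monotone_arcsin hxy
  linarith

set_option maxHeartbeats 1600000 in
/-- The three arccos-law-of-cosines angles of any triple of positive
lengths sum to `π` (with the broken-triangle convention). -/
lemma eang_sum (a b c : ℝ) (ha : 0 < a) (hb : 0 < b) (hc : 0 < c) :
    eang a b c + eang b c a + eang c a b = π := by
  unfold eang
  have hbc : (0:ℝ) < 2*b*c := by positivity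
  have hca : (0:ℝ) < 2*c*a := by positivity
  have hab : (0:ℝ) < 2*a*b := by positivity
  set x : ℝ := (b^2 + c^2 - a^2) / (2*b*c) with hx
  set y : ℝ := (c^2 + a^2 - b^2) / (2*c*a) with hy
  set z : ℝ := (a^2 + b^2 - c^2) / (2*a*b) with hz
  rcases le_or_gt (b + c) a with hA | hA
  · -- a too long
    have h1 : x ≤ -1 := by
      rw [hx, div_le_iff₀ hbc]; nlinarith
    have h2 : (1:ℝ) ≤ y := by
      rw [hy, le_div_iff₀ hca]; nlinarith
    have h3 : (1:ℝ) ≤ z := by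
      rw [hz, le_div_iff₀ hab]; nlinarith
    rw [Real.arccos_eq_pi.2 h1, Real.arccos_eq_zero.2 h2, Real.arccos_eq_zero.2 h3]
    ring
  rcases le_or_gt (c + a) b with hB | hB
  · have h1 : (1:ℝ) ≤ x := by
      rw [hx, le_div_iff₀ hbc]; nlinarith
    have h2 : y ≤ -1 := by
      rw [hy, div_le_iff₀ hca]; nlinarith
    have h3 : (1:ℝ) ≤ z := by
      rw [hz, le_div_iff₀ hab]; nlinarith
    rw [Real.arccos_eq_zero.2 h1, Real.arccos_eq_pi.2 h2, Real.arccos_eq_zero.2 h3]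
    ring
  rcases le_or_gt (a + b) c with hC | hC
  · have h1 : (1:ℝ) ≤ x := by
      rw [hx, le_div_iff₀ hbc]; nlinarith
    have h2 : (1:ℝ) ≤ y := by
      rw [hy, le_div_iff₀ hca]; nlinarith
    have h3 : z ≤ -1 := by
      rw [hz, div_le_iff₀ hab]; nlinarith
    rw [Real.arccos_eq_zero.2 h1, Real.arccos_eq_zero.2 h2, Real.arccos_eq_pi.2 h3]
    ring
  -- genuine triangle case
  have hx1 : -1 ≤ x := by rw [hx, le_div_iff₀ hbc]; nlinarith
  have hx2 : x ≤ 1 := by rw [hx, div_le_iff₀ hbc]; nlinarith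
  have hy1 : -1 ≤ y := by rw [hy, le_div_iff₀ hca]; nlinarith
  have hy2 : y ≤ 1 := by rw [hy, div_le_iff₀ hca]; nlinarith
  have hz1 : -1 ≤ z := by rw [hz, le_div_iff₀ hab]; nlinarith
  have hz2 : z ≤ 1 := by rw [hz, div_le_iff₀ hab]; nlinarith
  have hfac : (0:ℝ) ≤ (a+b)*(c-a+b)*(c+a-b) := by
    have h1 : (0:ℝ) < a+b := by linarith
    have h2 : (0:ℝ) < c-a+b := by linarith
    have h3 : (0:ℝ) < c+a-b := by linarith
    nlinarith [mul_pos (mul_pos h1 h2) h3]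
  have hxy0 : 0 ≤ x + y := by
    rw [hx, hy]
    rw [div_add_div _ _ (ne_of_gt hbc) (ne_of_gt hca)]
    apply div_nonneg _ (by positivity)
    nlinarith [mul_nonneg hc.le hfac]
  have hx2' : 0 ≤ 1 - x^2 := by nlinarith
  have hy2' : 0 ≤ 1 - y^2 := by nlinarith
  have hQ : (0:ℝ) ≤ (b+c-a)*(c+a-b)*(a+b-c)*(a+b+c) := by
    have h1 : (0:ℝ) < b+c-a := by linarith
    have h2 : (0:ℝ) < c+a-b := by linarith
    have h3 : (0:ℝ) < a+b-c := by linarith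
    have h4 : (0:ℝ) < a+b+c := by linarith
    nlinarith [mul_pos (mul_pos (mul_pos h1 h2) h3) h4]
  have hxyz : 0 ≤ x*y + z := by
    rw [hx, hy, hz]
    have e : (b^2 + c^2 - a^2) / (2*b*c) * ((c^2 + a^2 - b^2) / (2*c*a))
        + (a^2 + b^2 - c^2) / (2*a*b)
        = ((b+c-a)*(c+a-b)*(a+b-c)*(a+b+c)) / (4*a*b*c^2) := by
      field_simp
      ring
    rw [e]
    apply div_nonneg hQ (by positivity)
  have hsq : (1 - x^2) * (1 - y^2) = (x*y + z)^2 := by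
    rw [hx, hy, hz]
    field_simp
    ring
  have hsqrt : Real.sqrt (1 - x^2) * Real.sqrt (1 - y^2) = x*y + z := by
    rw [← Real.sqrt_mul hx2', hsq, Real.sqrt_sq hxyz]
  have hcos : Real.cos (Real.arccos x + Real.arccos y) = Real.cos (π - Real.arccos z) := by
    rw [Real.cos_add, Real.cos_pi_sub, Real.cos_arccos hx1 hx2, Real.cos_arccos hy1 hy2,
      Real.cos_arccos hz1 hz2, Real.sin_arccos, Real.sin_arccos, hsqrt]
    ring
  have hle : Real.arccos x + Real.arccos y ≤ π := by
    have : Real.arccos x ≤ Real.arccos (-y) := arccos_antitone (by linarith)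
    rw [Real.arccos_neg] at this
    linarith
  have heq : Real.arccos x + Real.arccos y = π - Real.arccos z := by
    apply Real.injOn_cos _ _ hcos
    · exact ⟨add_nonneg (Real.arccos_nonneg x) (Real.arccos_nonneg y), hle⟩
    · constructor
      · linarith [Real.arccos_le_pi z]
      · linarith [Real.arccos_nonneg z]
  linarith

lemma eang_scale (a b c k : ℝ) (hb : 0 < b) (hc : 0 < c) (hk : 0 < k) :
    eang (k*a) (k*b) (k*c) = eang a b c := by
  unfold eang
  congr 1
  rw [div_eq_div_iff (by positivity) (by positivity)]
  ring

lemma fTri_shift (x y z h : ℝ) :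
    fTri (x + h, y + h, z + h) = fTri (x, y, z) + h * π := by
  have ea : ∀ p q r : ℝ, eang (Real.exp (p+h)) (Real.exp (q+h)) (Real.exp (r+h))
      = eang (Real.exp p) (Real.exp q) (Real.exp r) := by
    intro p q r
    rw [Real.exp_add p h, Real.exp_add q h, Real.exp_add r h,
      mul_comm (Real.exp p), mul_comm (Real.exp q), mul_comm (Real.exp r)]
    exact eang_scale _ _ _ _ (Real.exp_pos q) (Real.exp_pos r) (Real.exp_pos h)
  have hsum := eang_sum (Real.exp x) (Real.exp y) (Real.exp z)
    (Real.exp_pos x) (Real.exp_pos y) (Real.exp_pos z)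
  simp only [fTri, ea]
  linear_combination h * hsum

/-- `E(u + h·1) = E(u) + h·(Σᵢ Θᵢ − π·|T|)`; consequently `E` is
scale-invariant if and only if `Σᵢ Θᵢ = π·|T|`. -/
theorem Efun_scale_invariance {V T : Type*} [Fintype V] [Fintype T]
    (tv : T → V × V × V)
    (hdist : ∀ t : T, (tv t).1 ≠ (tv t).2.1 ∧ (tv t).2.1 ≠ (tv t).2.2 ∧
      (tv t).2.2 ≠ (tv t).1)
    (lam : V → V → ℝ) (hsym : ∀ i j, lam i j = lam j i) (Θ : V → ℝ) :
    (∀ (u : V → ℝ) (h : ℝ),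
      Efun tv lam Θ (u + fun _ => h)
        = Efun tv lam Θ u + h * ((∑ i : V, Θ i) - π * (Fintype.card T : ℝ))) ∧
    ((∀ (u : V → ℝ) (h : ℝ), Efun tv lam Θ (u + fun _ => h) = Efun tv lam Θ u) ↔
      (∑ i : V, Θ i) = π * (Fintype.card T : ℝ)) := by
  have key : ∀ (u : V → ℝ) (h : ℝ),
      Efun tv lam Θ (u + fun _ => h)
        = Efun tv lam Θ u + h * ((∑ i : V, Θ i) - π * (Fintype.card T : ℝ)) := by
    intro u h
    have hlam : ∀ i j : V, lamT lam (u + fun _ => h) i j = lamT lam u i j + 2*h := by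
      intro i j; simp [lamT]; ring
    unfold Efun
    have hterm : ∀ t : T,
        (2 * fTri (lamT lam (u + fun _ => h) (tv t).1 (tv t).2.1 / 2,
               lamT lam (u + fun _ => h) (tv t).2.1 (tv t).2.2 / 2,
               lamT lam (u + fun _ => h) (tv t).2.2 (tv t).1 / 2)
          - (π/2) * (lamT lam (u + fun _ => h) (tv t).1 (tv t).2.1
               + lamT lam (u + fun _ => h) (tv t).2.1 (tv t).2.2
               + lamT lam (u + fun _ => h) (tv t).2.2 (tv t).1))
        = (2 * fTri (lamT lam u (tv t).1 (tv t).2.1 / 2,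
               lamT lam u (tv t).2.1 (tv t).2.2 / 2,
               lamT lam u (tv t).2.2 (tv t).1 / 2)
          - (π/2) * (lamT lam u (tv t).1 (tv t).2.1
               + lamT lam u (tv t).2.1 (tv t).2.2
               + lamT lam u (tv t).2.2 (tv t).1)) - h * π := by
      intro t
      rw [hlam, hlam, hlam]
      have e2 : ∀ w : ℝ, (w + 2*h) / 2 = w/2 + h := by intro w; ring
      rw [e2, e2, e2, fTri_shift]
      ring
    rw [Finset.sum_congr rfl (fun t _ => hterm t), Finset.sum_sub_distrib]
    have hθ : ∀ i : V, Θ i * ((u + fun _ => h : V → ℝ) i) = Θ i * u i + Θ i * h := by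
      intro i; simp only [Pi.add_apply]; ring
    rw [Finset.sum_congr rfl (fun i _ => hθ i), Finset.sum_add_distrib]
    have hh : ∑ i : V, Θ i * h = h * ∑ i : V, Θ i := by
      rw [Finset.mul_sum]
      exact Finset.sum_congr rfl (fun i _ => mul_comm _ _)
    have hc : ∑ _t : T, h * π = (Fintype.card T : ℝ) * (h * π) := by
      simp [Finset.sum_const, Finset.card_univ]
    rw [hh, hc]
    ring
  refine ⟨key, ?_, ?_⟩
  · intro hinv
    have h1 := key 0 1
    rw [hinv 0 1] at h1
    have h2 : (0:ℝ) = (∑ i : V, Θ i) - π * (Fintype.card T : ℝ) := by linarith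
    linarith
  · intro heq u h
    rw [key u h, heq]
    ring
end
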